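/- In the setting of the two-dimensional sigma model (g : ℝ² → symmetric 2×2 matrices smooth with det g < 0 everywhere, √g := √(−det g), g^{αβ} the inverse entries, X : ℝ² → ℝ^D smooth), define for each ρ the Euler–Lagrange expression E_ρ[X] := ∂_+( √g g^{+β} G_{ρν}(X) ∂_βX^ν + B_{ρν}(X) ∂_−X^ν ) + ∂_−( √g g^{−β} G_{ρν}(X) ∂_βX^ν − B_{ρν}(X) ∂_+X^ν ) − ½ √g g^{αβ} ∂_αX^μ ∂_βX^ν ∂_ρG_{μν}(X) − ∂_ρB_{μν}(X) ∂_+X^μ ∂_−X^ν. Let (ζ, b) be a Killing pair and define the Noether current j⁺ := √g g^{+β} ζ_μ(X) ∂_βX^μ + b_μ(X) ∂_−X^μ and j⁻ := √g g^{−β} ζ_μ(X) ∂_βX^μ − b_μ(X) ∂_+X^μ, where ζ_μ := G_{μν}ζ^ν. If E_ρ[X] = 0 identically for all ρ, then ∂_+ j⁺ + ∂_− j⁻ = 0 identically. -/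

import Mathlib

noncomputable section

/-- Partial derivative of `f` at `x` in the `μ`-th coordinate direction. -/
def pd {D : ℕ} (μ : Fin D) (f : (Fin D → ℝ) → ℝ) (x : Fin D → ℝ) : ℝ :=
  fderiv ℝ f x (Pi.single μ 1)

/-- A smooth real-valued function. -/
def Sm {D : ℕ} (f : (Fin D → ℝ) → ℝ) : Prop := ContDiff ℝ (⊤ : ℕ∞) f

/-- A smooth vector field on `ℝ^D`. -/
def SmoothVF {D : ℕ} (V : (Fin D → ℝ) → Fin D → ℝ) : Prop := ∀ μ, Sm fun x => V x μ

/-- A smooth field of 2-tensors on `ℝ^D`. -/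
def Smooth2T {D : ℕ} (T : (Fin D → ℝ) → Fin D → Fin D → ℝ) : Prop :=
  ∀ μ ν, Sm fun x => T x μ ν

/-- The connection coefficients `Γ_{μν,ρ} = ½(∂_μG_{νρ} + ∂_νG_{μρ} − ∂_ρG_{μν})`. -/
def Gam {D : ℕ} (G : (Fin D → ℝ) → Fin D → Fin D → ℝ) (μ ν ρ : Fin D) (x : Fin D → ℝ) : ℝ :=
  (pd μ (fun y => G y ν ρ) x + pd ν (fun y => G y μ ρ) x - pd ρ (fun y => G y μ ν) x) / 2

/-- The torsion `H_{μνρ} = ∂_μB_{νρ} + ∂_νB_{ρμ} + ∂_ρB_{μν}`. -/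
def Htor {D : ℕ} (B : (Fin D → ℝ) → Fin D → Fin D → ℝ) (μ ν ρ : Fin D) (x : Fin D → ℝ) : ℝ :=
  pd μ (fun y => B y ν ρ) x + pd ν (fun y => B y ρ μ) x + pd ρ (fun y => B y μ ν) x

/-- `Γ⁺_{μν,ρ} = Γ_{μν,ρ} + ½H_{μνρ}`. -/
def GamP {D : ℕ} (G B : (Fin D → ℝ) → Fin D → Fin D → ℝ) (μ ν ρ : Fin D) (x : Fin D → ℝ) : ℝ :=
  Gam G μ ν ρ x + Htor B μ ν ρ x / 2

/-- `Γ⁻_{μν,ρ} = Γ_{μν,ρ} − ½H_{μνρ}`. -/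
def GamM {D : ℕ} (G B : (Fin D → ℝ) → Fin D → Fin D → ℝ) (μ ν ρ : Fin D) (x : Fin D → ℝ) : ℝ :=
  Gam G μ ν ρ x - Htor B μ ν ρ x / 2

/-- The lowered components `V_μ = G_{μν}V^ν` of a vector field. -/
def lowerV {D : ℕ} (G : (Fin D → ℝ) → Fin D → Fin D → ℝ)
    (V : (Fin D → ℝ) → Fin D → ℝ) (μ : Fin D) (x : Fin D → ℝ) : ℝ :=
  ∑ ν, G x μ ν * V x ν

/-- The covariant derivative `D⁺_μV_ν = G_{νρ}∂_μV^ρ + Γ⁺_{μρ,ν}V^ρ`. -/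
def Dp {D : ℕ} (G B : (Fin D → ℝ) → Fin D → Fin D → ℝ)
    (V : (Fin D → ℝ) → Fin D → ℝ) (μ ν : Fin D) (x : Fin D → ℝ) : ℝ :=
  (∑ ρ, G x ν ρ * pd μ (fun y => V y ρ) x) + ∑ ρ, GamP G B μ ρ ν x * V x ρ

/-- The covariant derivative `D⁻_μV_ν = G_{νρ}∂_μV^ρ + Γ⁻_{μρ,ν}V^ρ`. -/
def Dm {D : ℕ} (G B : (Fin D → ℝ) → Fin D → Fin D → ℝ)
    (V : (Fin D → ℝ) → Fin D → ℝ) (μ ν : Fin D) (x : Fin D → ℝ) : ℝ :=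
  (∑ ρ, G x ν ρ * pd μ (fun y => V y ρ) x) + ∑ ρ, GamM G B μ ρ ν x * V x ρ

/-- The Lie derivative of the metric:
`(ℒ_ζG)_{μν} = ζ^ρ∂_ρG_{μν} + ∂_μζ^ρ·G_{ρν} + ∂_νζ^ρ·G_{μρ}`. -/
def lieG {D : ℕ} (G : (Fin D → ℝ) → Fin D → Fin D → ℝ)
    (ζ : (Fin D → ℝ) → Fin D → ℝ) (μ ν : Fin D) (x : Fin D → ℝ) : ℝ :=
  (∑ ρ, ζ x ρ * pd ρ (fun y => G y μ ν) x)
    + (∑ ρ, pd μ (fun y => ζ y ρ) x * G x ρ ν)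
    + ∑ ρ, pd ν (fun y => ζ y ρ) x * G x μ ρ

/-- A Killing pair `(ζ, b)`: `D⁻_μζ_ν + D⁺_νζ_μ + ∂_μb_ν − ∂_νb_μ = 0`. -/
def IsKillingPair {D : ℕ} (G B : (Fin D → ℝ) → Fin D → Fin D → ℝ)
    (ζ b : (Fin D → ℝ) → Fin D → ℝ) : Prop :=
  ∀ (μ ν : Fin D) (x : Fin D → ℝ),
    Dm G B ζ μ ν x + Dp G B ζ ν μ x
      + pd μ (fun y => b y ν) x - pd ν (fun y => b y μ) x = 0

/-- The Euler–Lagrange expression `E_ρ[X]` of the sigma model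
(world-sheet coordinates `x⁺ = 0`, `x⁻ = 1`, `√g = √(−det g)`). -/
def ELop {D : ℕ} (G B : (Fin D → ℝ) → Fin D → Fin D → ℝ)
    (g : (Fin 2 → ℝ) → Matrix (Fin 2) (Fin 2) ℝ)
    (X : (Fin 2 → ℝ) → Fin D → ℝ) (ρ : Fin D) (x : Fin 2 → ℝ) : ℝ :=
  pd 0 (fun y =>
      (∑ β, Real.sqrt (-(g y).det) * (g y)⁻¹ 0 β *
          ∑ ν, G (X y) ρ ν * pd β (fun z => X z ν) y)
        + ∑ ν, B (X y) ρ ν * pd 1 (fun z => X z ν) y) x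
    + pd 1 (fun y =>
      (∑ β, Real.sqrt (-(g y).det) * (g y)⁻¹ 1 β *
          ∑ ν, G (X y) ρ ν * pd β (fun z => X z ν) y)
        - ∑ ν, B (X y) ρ ν * pd 0 (fun z => X z ν) y) x
    - (Real.sqrt (-(g x).det) *
        ∑ α, ∑ β, (g x)⁻¹ α β *
          ∑ μ, ∑ ν, pd α (fun z => X z μ) x * pd β (fun z => X z ν) x *
            pd ρ (fun w => G w μ ν) (X x)) / 2
    - ∑ μ, ∑ ν, pd ρ (fun w => B w μ ν) (X x) *
        pd 0 (fun z => X z μ) x * pd 1 (fun z => X z ν) x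

/-- The Noether current `j⁺` associated with a Killing pair `(ζ, b)`. -/
def jP {D : ℕ} (G : (Fin D → ℝ) → Fin D → Fin D → ℝ)
    (g : (Fin 2 → ℝ) → Matrix (Fin 2) (Fin 2) ℝ)
    (ζ b : (Fin D → ℝ) → Fin D → ℝ)
    (X : (Fin 2 → ℝ) → Fin D → ℝ) (x : Fin 2 → ℝ) : ℝ :=
  (∑ β, Real.sqrt (-(g x).det) * (g x)⁻¹ 0 β *
      ∑ μ, lowerV G ζ μ (X x) * pd β (fun z => X z μ) x)
    + ∑ μ, b (X x) μ * pd 1 (fun z => X z μ) x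

/-- The Noether current `j⁻` associated with a Killing pair `(ζ, b)`. -/
def jM {D : ℕ} (G : (Fin D → ℝ) → Fin D → Fin D → ℝ)
    (g : (Fin 2 → ℝ) → Matrix (Fin 2) (Fin 2) ℝ)
    (ζ b : (Fin D → ℝ) → Fin D → ℝ)
    (X : (Fin 2 → ℝ) → Fin D → ℝ) (x : Fin 2 → ℝ) : ℝ :=
  (∑ β, Real.sqrt (-(g x).det) * (g x)⁻¹ 1 β *
      ∑ μ, lowerV G ζ μ (X x) * pd β (fun z => X z μ) x)
    - ∑ μ, b (X x) μ * pd 0 (fun z => X z μ) x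


lemma topSucc : ((⊤:ℕ∞) : WithTop ℕ∞) + 1 ≤ ((⊤:ℕ∞) : WithTop ℕ∞) := by
  norm_num

lemma two_le_inf : (2 : WithTop ℕ∞) ≤ ((⊤:ℕ∞) : WithTop ℕ∞) := by
  norm_cast

lemma smDiff {D : ℕ} {f : (Fin D → ℝ) → ℝ} (hf : Sm f) : Differentiable ℝ f :=
  hf.differentiable (by simp)

lemma smDiffAt {D : ℕ} {f : (Fin D → ℝ) → ℝ} (hf : Sm f) {x : Fin D → ℝ} : DifferentiableAt ℝ f x :=
  (smDiff hf) x

lemma smPd {D : ℕ} {f : (Fin D → ℝ) → ℝ} (hf : Sm f) (β : Fin D) :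
    Sm (fun y => pd β f y) := by
  exact (hf.fderiv_right topSucc).clm_apply contDiff_const

-- second derivative symmetry
lemma pd_comm {D : ℕ} {f : (Fin D → ℝ) → ℝ} (hf : Sm f) (α β : Fin D) (x : Fin D → ℝ) :
    pd α (fun y => pd β f y) x = pd β (fun y => pd α f y) x := by
  have hsymm : IsSymmSndFDerivAt ℝ f x := (hf.contDiffAt).isSymmSndFDerivAt (by rw [minSmoothness_of_isRCLikeNormedField]; exact two_le_inf)
  have hd : DifferentiableAt ℝ (fderiv ℝ f) x :=
    ((hf.fderiv_right topSucc).differentiable (by simp)) x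
  have h1 : ∀ (v w : Fin D → ℝ), fderiv ℝ (fun y => fderiv ℝ f y v) x w
      = fderiv ℝ (fderiv ℝ f) x w v := by
    intro v w
    rw [fderiv_clm_apply hd (differentiableAt_const v)]
    simp
  show fderiv ℝ (fun y => fderiv ℝ f y (Pi.single β 1)) x (Pi.single α 1) = _
  rw [h1, hsymm.eq]
  show _ = fderiv ℝ (fun y => fderiv ℝ f y (Pi.single α 1)) x (Pi.single β 1)
  rw [h1]

lemma pd_add {D : ℕ} {f g : (Fin D → ℝ) → ℝ} {x : Fin D → ℝ} (μ : Fin D)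
    (hf : DifferentiableAt ℝ f x) (hg : DifferentiableAt ℝ g x) :
    pd μ (fun y => f y + g y) x = pd μ f x + pd μ g x := by
  unfold pd; rw [fderiv_fun_add hf hg]; rfl

lemma pd_sub {D : ℕ} {f g : (Fin D → ℝ) → ℝ} {x : Fin D → ℝ} (μ : Fin D)
    (hf : DifferentiableAt ℝ f x) (hg : DifferentiableAt ℝ g x) :
    pd μ (fun y => f y - g y) x = pd μ f x - pd μ g x := by
  unfold pd; rw [fderiv_fun_sub hf hg]; rfl

lemma pd_mul {D : ℕ} {f g : (Fin D → ℝ) → ℝ} {x : Fin D → ℝ} (μ : Fin D)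
    (hf : DifferentiableAt ℝ f x) (hg : DifferentiableAt ℝ g x) :
    pd μ (fun y => f y * g y) x = pd μ f x * g x + f x * pd μ g x := by
  unfold pd; rw [fderiv_fun_mul hf hg]; simp [mul_comm]; ring

lemma pd_sum {D : ℕ} {ι : Type*} (u : Finset ι) {f : ι → (Fin D → ℝ) → ℝ} {x : Fin D → ℝ} (μ : Fin D)
    (hf : ∀ i ∈ u, DifferentiableAt ℝ (f i) x) :
    pd μ (fun y => ∑ i ∈ u, f i y) x = ∑ i ∈ u, pd μ (f i) x := by
  unfold pd; rw [fderiv_fun_sum hf]; simp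

lemma pd_comp {n D : ℕ} {f : (Fin D → ℝ) → ℝ} {X : (Fin n → ℝ) → (Fin D → ℝ)} {x : Fin n → ℝ}
    (α : Fin n) (hf : DifferentiableAt ℝ f (X x)) (hX : ∀ μ, DifferentiableAt ℝ (fun y => X y μ) x) :
    pd α (fun y => f (X y)) x = ∑ ρ, pd ρ f (X x) * pd α (fun y => X y ρ) x := by
  have hXd : DifferentiableAt ℝ X x := differentiableAt_pi.2 hX
  have hc : pd α (fun y => f (X y)) x = fderiv ℝ f (X x) (fderiv ℝ X x (Pi.single α 1)) := by
    unfold pd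
    rw [show (fun y => f (X y)) = f ∘ X from rfl, fderiv_comp x hf hXd]
    rfl
  rw [hc]
  set w : Fin D → ℝ := fderiv ℝ X x (Pi.single α 1) with hw
  have hwρ : ∀ ρ, w ρ = pd α (fun y => X y ρ) x := by
    intro ρ
    rw [hw, show X = (fun y ρ => X y ρ) from rfl, fderiv_pi hX]
    rfl
  have hdecomp : w = ∑ ρ, (w ρ) • (Pi.single ρ (1:ℝ) : Fin D → ℝ) := by
    funext i
    rw [Finset.sum_apply]
    simp [Pi.single_apply]
  calc fderiv ℝ f (X x) w = ∑ ρ, (w ρ) * fderiv ℝ f (X x) (Pi.single ρ 1) := by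
        conv_lhs => rw [hdecomp]
        rw [map_sum]
        simp
    _ = ∑ ρ, pd ρ f (X x) * pd α (fun y => X y ρ) x := by
        apply Finset.sum_congr rfl; intro ρ _; rw [hwρ]; unfold pd; ring
def Sab (g : (Fin 2 → ℝ) → Matrix (Fin 2) (Fin 2) ℝ) (α β : Fin 2) (y : Fin 2 → ℝ) : ℝ :=
  Real.sqrt (-(g y).det) * (g y)⁻¹ α β

lemma Sab_smooth {g : (Fin 2 → ℝ) → Matrix (Fin 2) (Fin 2) ℝ}
    (hgs : ∀ α β, ContDiff ℝ (⊤ : ℕ∞) fun x => g x α β)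
    (hgdet : ∀ x, (g x).det < 0) (α β : Fin 2) : Sm (Sab g α β) := by
  have hdet : Sm (fun y => (g y).det) := by
    have : (fun y => (g y).det) = fun y => g y 0 0 * g y 1 1 - g y 0 1 * g y 1 0 := by
      funext y; exact Matrix.det_fin_two (g y)
    rw [this]
    exact ((hgs 0 0).mul (hgs 1 1)).sub ((hgs 0 1).mul (hgs 1 0))
  have hsqrt : Sm (fun y => Real.sqrt (-(g y).det)) := by
    rw [Sm, contDiff_iff_contDiffAt]
    intro y
    exact (Real.contDiffAt_sqrt (by nlinarith [hgdet y])).comp y (hdet.neg).contDiffAt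
  have hadj : Sm (fun y => (g y).adjugate α β) := by
    fin_cases α <;> fin_cases β <;> simp [Matrix.adjugate_fin_two] <;>
      first
        | exact hgs 1 1
        | exact (hgs 0 1).neg
        | exact (hgs 1 0).neg
        | exact hgs 0 0
  have hinv : Sm (fun y => (g y)⁻¹ α β) := by
    have : (fun y => (g y)⁻¹ α β) = fun y => ((g y).det)⁻¹ * (g y).adjugate α β := by
      funext y; rw [Matrix.inv_def]; simp [Ring.inverse_eq_inv']
    rw [this]
    exact (hdet.inv (fun y => ne_of_lt (hgdet y))).mul hadj
  exact hsqrt.mul hinv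

lemma Sab_symm {g : (Fin 2 → ℝ) → Matrix (Fin 2) (Fin 2) ℝ}
    (hgsym : ∀ x α β, g x α β = g x β α) (y : Fin 2 → ℝ) (α β : Fin 2) :
    Sab g α β y = Sab g β α y := by
  have h : (g y)⁻¹ α β = (g y)⁻¹ β α := by
    rw [Matrix.inv_def]
    fin_cases α <;> fin_cases β <;> simp [Matrix.adjugate_fin_two] <;> exact Or.inl (hgsym y _ _)
  rw [Sab, Sab, h]

lemma smCompX {n D : ℕ} {X : (Fin n → ℝ) → Fin D → ℝ} (hX : ∀ μ, Sm (fun y => X y μ))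
    {f : (Fin D → ℝ) → ℝ} (hf : Sm f) : Sm (fun y => f (X y)) :=
  hf.comp (contDiff_pi.2 hX)

lemma smInner {D : ℕ} {X : (Fin 2 → ℝ) → Fin D → ℝ} (hX : ∀ μ, Sm (fun y => X y μ))
    {F : Fin D → (Fin D → ℝ) → ℝ} (hF : ∀ μ, Sm (F μ)) (β : Fin 2) :
    Sm (fun y => ∑ μ, F μ (X y) * pd β (fun z => X z μ) y) :=
  ContDiff.sum (fun μ _ => (smCompX hX (hF μ)).mul (smPd (hX μ) β))

lemma pd_key {D : ℕ} {X : (Fin 2 → ℝ) → Fin D → ℝ} (hX : ∀ μ, Sm (fun y => X y μ))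
    {F : Fin D → (Fin D → ℝ) → ℝ} (hF : ∀ μ, Sm (F μ)) (α β : Fin 2) (x : Fin 2 → ℝ) :
    pd α (fun y => ∑ μ, F μ (X y) * pd β (fun z => X z μ) y) x
    = (∑ μ, (∑ σ, pd σ (F μ) (X x) * pd α (fun y => X y σ) x) * pd β (fun z => X z μ) x)
      + ∑ μ, F μ (X x) * pd α (fun y => pd β (fun z => X z μ) y) x := by
  rw [pd_sum Finset.univ α
    (fun μ _ => (smDiffAt (smCompX hX (hF μ))).fun_mul (smDiffAt (smPd (hX μ) β)))]
  rw [← Finset.sum_add_distrib]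
  apply Finset.sum_congr rfl
  intro μ _
  rw [pd_mul α (smDiffAt (smCompX hX (hF μ))) (smDiffAt (smPd (hX μ) β)),
    pd_comp α (smDiffAt (hF μ)) (fun σ => smDiffAt (hX σ))]

section Pieces
variable {D : ℕ} (X : (Fin 2 → ℝ) → Fin D → ℝ) (g : (Fin 2 → ℝ) → Matrix (Fin 2) (Fin 2) ℝ)

lemma pd_outer (hX : ∀ μ, Sm (fun y => X y μ))
    (F : Fin D → (Fin D → ℝ) → ℝ) (hF : ∀ μ, Sm (F μ))
    (hgs : ∀ α β, ContDiff ℝ (⊤ : ℕ∞) fun x => g x α β) (hgdet : ∀ x, (g x).det < 0)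
    (α' α : Fin 2) (x : Fin 2 → ℝ) :
    pd α (fun y => ∑ β, Sab g α' β y * ∑ μ, F μ (X y) * pd β (fun z => X z μ) y) x
    = ∑ β, (pd α (Sab g α' β) x * (∑ μ, F μ (X x) * pd β (fun z => X z μ) x)
        + Sab g α' β x *
          ((∑ μ, (∑ σ, pd σ (F μ) (X x) * pd α (fun y => X y σ) x) * pd β (fun z => X z μ) x)
            + ∑ μ, F μ (X x) * pd α (fun y => pd β (fun z => X z μ) y) x)) := by
  rw [pd_sum Finset.univ α (fun β _ =>
    (smDiffAt (Sab_smooth hgs hgdet α' β)).fun_mul (smDiffAt (smInner hX hF β)))]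
  apply Finset.sum_congr rfl
  intro β _
  rw [pd_mul α (smDiffAt (Sab_smooth hgs hgdet α' β)) (smDiffAt (smInner hX hF β)),
    pd_key hX hF α β x]

lemma pd_pieceAdd (hX : ∀ μ, Sm (fun y => X y μ))
    (F1 F2 : Fin D → (Fin D → ℝ) → ℝ) (hF1 : ∀ μ, Sm (F1 μ)) (hF2 : ∀ μ, Sm (F2 μ))
    (hgs : ∀ α β, ContDiff ℝ (⊤ : ℕ∞) fun x => g x α β) (hgdet : ∀ x, (g x).det < 0)
    (α' α γ : Fin 2) (x : Fin 2 → ℝ) :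
    pd α (fun y =>
      (∑ β, Real.sqrt (-(g y).det) * (g y)⁻¹ α' β * ∑ μ, F1 μ (X y) * pd β (fun z => X z μ) y)
        + ∑ μ, F2 μ (X y) * pd γ (fun z => X z μ) y) x
    = (∑ β, (pd α (Sab g α' β) x * (∑ μ, F1 μ (X x) * pd β (fun z => X z μ) x)
        + Sab g α' β x *
          ((∑ μ, (∑ σ, pd σ (F1 μ) (X x) * pd α (fun y => X y σ) x) * pd β (fun z => X z μ) x)
            + ∑ μ, F1 μ (X x) * pd α (fun y => pd β (fun z => X z μ) y) x)))
      + ((∑ μ, (∑ σ, pd σ (F2 μ) (X x) * pd α (fun y => X y σ) x) * pd γ (fun z => X z μ) x)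
        + ∑ μ, F2 μ (X x) * pd α (fun y => pd γ (fun z => X z μ) y) x) := by
  have e1 : (fun y =>
      (∑ β, Real.sqrt (-(g y).det) * (g y)⁻¹ α' β * ∑ μ, F1 μ (X y) * pd β (fun z => X z μ) y)
        + ∑ μ, F2 μ (X y) * pd γ (fun z => X z μ) y)
      = (fun y => (∑ β, Sab g α' β y * ∑ μ, F1 μ (X y) * pd β (fun z => X z μ) y)
        + ∑ μ, F2 μ (X y) * pd γ (fun z => X z μ) y) := rfl
  rw [e1, pd_add α
    (smDiffAt (ContDiff.sum (fun β _ => (Sab_smooth hgs hgdet α' β).mul (smInner hX hF1 β))))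
    (smDiffAt (smInner hX hF2 γ)),
    pd_outer X g hX F1 hF1 hgs hgdet α' α x, pd_key hX hF2 α γ x]

lemma pd_pieceSub (hX : ∀ μ, Sm (fun y => X y μ))
    (F1 F2 : Fin D → (Fin D → ℝ) → ℝ) (hF1 : ∀ μ, Sm (F1 μ)) (hF2 : ∀ μ, Sm (F2 μ))
    (hgs : ∀ α β, ContDiff ℝ (⊤ : ℕ∞) fun x => g x α β) (hgdet : ∀ x, (g x).det < 0)
    (α' α γ : Fin 2) (x : Fin 2 → ℝ) :
    pd α (fun y =>
      (∑ β, Real.sqrt (-(g y).det) * (g y)⁻¹ α' β * ∑ μ, F1 μ (X y) * pd β (fun z => X z μ) y)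
        - ∑ μ, F2 μ (X y) * pd γ (fun z => X z μ) y) x
    = (∑ β, (pd α (Sab g α' β) x * (∑ μ, F1 μ (X x) * pd β (fun z => X z μ) x)
        + Sab g α' β x *
          ((∑ μ, (∑ σ, pd σ (F1 μ) (X x) * pd α (fun y => X y σ) x) * pd β (fun z => X z μ) x)
            + ∑ μ, F1 μ (X x) * pd α (fun y => pd β (fun z => X z μ) y) x)))
      - ((∑ μ, (∑ σ, pd σ (F2 μ) (X x) * pd α (fun y => X y σ) x) * pd γ (fun z => X z μ) x)
        + ∑ μ, F2 μ (X x) * pd α (fun y => pd γ (fun z => X z μ) y) x) := by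
  have e1 : (fun y =>
      (∑ β, Real.sqrt (-(g y).det) * (g y)⁻¹ α' β * ∑ μ, F1 μ (X y) * pd β (fun z => X z μ) y)
        - ∑ μ, F2 μ (X y) * pd γ (fun z => X z μ) y)
      = (fun y => (∑ β, Sab g α' β y * ∑ μ, F1 μ (X y) * pd β (fun z => X z μ) y)
        - ∑ μ, F2 μ (X y) * pd γ (fun z => X z μ) y) := rfl
  rw [e1, pd_sub α
    (smDiffAt (ContDiff.sum (fun β _ => (Sab_smooth hgs hgdet α' β).mul (smInner hX hF1 β))))
    (smDiffAt (smInner hX hF2 γ)),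
    pd_outer X g hX F1 hF1 hgs hgdet α' α x, pd_key hX hF2 α γ x]

end Pieces

lemma smLowerV {D : ℕ} {G : (Fin D → ℝ) → Fin D → Fin D → ℝ} {ζ : (Fin D → ℝ) → Fin D → ℝ}
    (hGs : Smooth2T G) (hζ : SmoothVF ζ) (μ : Fin D) : Sm (lowerV G ζ μ) :=
  ContDiff.sum (fun ν _ => (hGs μ ν).mul (hζ ν))

lemma pd_lowerV {D : ℕ} {G : (Fin D → ℝ) → Fin D → Fin D → ℝ} {ζ : (Fin D → ℝ) → Fin D → ℝ}
    (hGs : Smooth2T G) (hζ : SmoothVF ζ) (σ μ : Fin D) (p : Fin D → ℝ) :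
    pd σ (lowerV G ζ μ) p
    = ∑ ν, (pd σ (fun w => G w μ ν) p * ζ p ν + G p μ ν * pd σ (fun w => ζ w ν) p) := by
  show pd σ (fun w => ∑ ν, G w μ ν * ζ w ν) p = _
  rw [pd_sum Finset.univ σ (fun ν _ => (smDiffAt (hGs μ ν)).fun_mul (smDiffAt (hζ ν)))]
  exact Finset.sum_congr rfl (fun ν _ => pd_mul σ (smDiffAt (hGs μ ν)) (smDiffAt (hζ ν)))

lemma sqrt_mul_sum (g : (Fin 2 → ℝ) → Matrix (Fin 2) (Fin 2) ℝ) (x : Fin 2 → ℝ)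
    (T : Fin 2 → Fin 2 → ℝ) :
    Real.sqrt (-(g x).det) * ∑ α, ∑ β, (g x)⁻¹ α β * T α β
    = ∑ α, ∑ β, Sab g α β x * T α β := by
  simp only [Finset.mul_sum, Sab, mul_assoc]


lemma pd_neg {D : ℕ} (μ : Fin D) (f : (Fin D → ℝ) → ℝ) (x : Fin D → ℝ) :
    pd μ (fun y => -f y) x = -pd μ f x := by
  unfold pd; rw [fderiv_fun_neg]; rfl

lemma alg {D : ℕ} (s : Fin 2 → Fin 2 → ℝ) (ds0 ds1 : Fin 2 → ℝ)
    (A : Fin 2 → Fin D → ℝ) (C : Fin 2 → Fin 2 → Fin D → ℝ)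
    (Gv Bv : Fin D → Fin D → ℝ) (dG dB : Fin D → Fin D → Fin D → ℝ)
    (z bb : Fin D → ℝ) (dz db : Fin D → Fin D → ℝ)
    (hs : s 0 1 = s 1 0)
    (hC : ∀ μ, C 0 1 μ = C 1 0 μ)
    (hGv : ∀ μ ν, Gv μ ν = Gv ν μ)
    (hdG : ∀ ρ μ ν, dG ρ μ ν = dG ρ ν μ)
    (hdB : ∀ ρ μ ν, dB ρ μ ν = -dB ρ ν μ)
    (hKe : ∀ μ ν : Fin D, (∑ ρ, Gv ν ρ * dz μ ρ
        + ∑ ρ, ((dG μ ρ ν + dG ρ μ ν - dG ν μ ρ)/2 - (dB μ ρ ν + dB ρ ν μ + dB ν μ ρ)/2) * z ρ)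
        + (∑ ρ, Gv μ ρ * dz ν ρ
        + ∑ ρ, ((dG ν ρ μ + dG ρ ν μ - dG μ ν ρ)/2 + (dB ν ρ μ + dB ρ μ ν + dB μ ν ρ)/2) * z ρ)
        + db μ ν - db ν μ = 0)
    (hEe : ∀ ρ : Fin D, (∑ β, (ds0 β * ∑ μ, Gv ρ μ * A β μ
          + s 0 β * ((∑ μ, (∑ σ, dG σ ρ μ * A 0 σ) * A β μ) + ∑ μ, Gv ρ μ * C 0 β μ))
        + ((∑ μ, (∑ σ, dB σ ρ μ * A 0 σ) * A 1 μ) + ∑ μ, Bv ρ μ * C 0 1 μ)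
        + (∑ β, (ds1 β * ∑ μ, Gv ρ μ * A β μ
          + s 1 β * ((∑ μ, (∑ σ, dG σ ρ μ * A 1 σ) * A β μ) + ∑ μ, Gv ρ μ * C 1 β μ))
        - ((∑ μ, (∑ σ, dB σ ρ μ * A 1 σ) * A 0 μ) + ∑ μ, Bv ρ μ * C 1 0 μ))
        - (∑ α, ∑ β, s α β * ∑ μ, ∑ ν, A α μ * A β ν * dG ρ μ ν)/2
        - ∑ μ, ∑ ν, dB ρ μ ν * A 0 μ * A 1 ν) = 0) :
    (∑ β, (ds0 β * ∑ μ, (∑ ν, Gv μ ν * z ν) * A β μ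
        + s 0 β * ((∑ μ, (∑ σ, (∑ ν, (dG σ μ ν * z ν + Gv μ ν * dz σ ν)) * A 0 σ) * A β μ)
            + ∑ μ, (∑ ν, Gv μ ν * z ν) * C 0 β μ))
      + ((∑ μ, (∑ σ, db σ μ * A 0 σ) * A 1 μ) + ∑ μ, bb μ * C 0 1 μ))
    + (∑ β, (ds1 β * ∑ μ, (∑ ν, Gv μ ν * z ν) * A β μ
        + s 1 β * ((∑ μ, (∑ σ, (∑ ν, (dG σ μ ν * z ν + Gv μ ν * dz σ ν)) * A 1 σ) * A β μ)
            + ∑ μ, (∑ ν, Gv μ ν * z ν) * C 1 β μ))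
      - ((∑ μ, (∑ σ, db σ μ * A 1 σ) * A 0 μ) + ∑ μ, bb μ * C 1 0 μ)) = 0 := by
  simp only [Fin.sum_univ_two] at hEe ⊢
  rw [hs] at hEe ⊢
  -- helper: triple sum rotation
  have sum_rot : ∀ f : Fin D → Fin D → Fin D → ℝ,
      (∑ a, ∑ b, ∑ c, f a b c) = ∑ c, ∑ a, ∑ b, f a b c := by
    intro f
    rw [show (∑ a, ∑ b, ∑ c, f a b c) = ∑ a, ∑ c, ∑ b, f a b c from
      Finset.sum_congr rfl fun a _ => Finset.sum_comm]
    exact Finset.sum_comm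
  have H1 : ∀ (t : ℝ) (w : Fin D → ℝ),
      t * ∑ μ, (∑ ν, Gv μ ν * z ν) * w μ = ∑ ρ, z ρ * (t * ∑ μ, Gv ρ μ * w μ) := by
    intro t w
    simp only [Finset.mul_sum, Finset.sum_mul]
    rw [Finset.sum_comm]
    refine Finset.sum_congr rfl fun a _ => Finset.sum_congr rfl fun b _ => ?_
    rw [hGv b a]; ring
  have H2 : ∀ (t : ℝ) (u w : Fin D → ℝ),
      t * ∑ μ, (∑ σ, (∑ ν, dG σ μ ν * z ν) * u σ) * w μ
        = ∑ ρ, z ρ * (t * ∑ μ, (∑ σ, dG σ ρ μ * u σ) * w μ) := by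
    intro t u w
    simp only [Finset.mul_sum, Finset.sum_mul]
    rw [sum_rot]
    refine Finset.sum_congr rfl fun a _ => Finset.sum_congr rfl fun b _ =>
      Finset.sum_congr rfl fun c _ => ?_
    rw [hdG c b a]; ring
  have H3 : ∀ (u w : Fin D → ℝ),
      ∑ μ, (∑ σ, (∑ ν, Gv μ ν * dz σ ν) * u σ) * w μ
        = ∑ μ, ∑ ν, u μ * w ν * ∑ ρ, Gv ν ρ * dz μ ρ := by
    intro u w
    simp only [Finset.mul_sum, Finset.sum_mul]
    rw [Finset.sum_comm]
    refine Finset.sum_congr rfl fun a _ => Finset.sum_congr rfl fun b _ =>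
      Finset.sum_congr rfl fun c _ => ?_
    ring
  have HK13 : ∀ (u v : Fin D → ℝ),
      (∑ μ, ∑ ν, u μ * v ν * ∑ ρ, Gv μ ρ * dz ν ρ)
        = ∑ μ, ∑ ν, v μ * u ν * ∑ ρ, Gv ν ρ * dz μ ρ := by
    intro u v
    rw [Finset.sum_comm]
    refine Finset.sum_congr rfl fun a _ => Finset.sum_congr rfl fun b _ => ?_
    ring
  have HM : ∀ (u v : Fin D → ℝ),
      (∑ μ, ∑ ν, u μ * v ν *
          ∑ ρ, ((dG μ ρ ν + dG ρ μ ν - dG ν μ ρ) / 2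
              - (dB μ ρ ν / 2 + dB ρ ν μ / 2 + dB ν μ ρ / 2)) * z ρ)
        + ∑ μ, ∑ ν, u μ * v ν *
          ∑ ρ, ((dG ν ρ μ + dG ρ ν μ - dG μ ν ρ) / 2
              + (dB ν ρ μ / 2 + dB ρ μ ν / 2 + dB μ ν ρ / 2)) * z ρ
        = ((∑ ρ, z ρ * ∑ μ, ∑ ν, u μ * v ν * dG ρ μ ν)
          + (∑ ρ, z ρ * ∑ μ, ∑ ν, u μ * v ν * dB μ ν ρ)
          + (∑ ρ, z ρ * ∑ μ, ∑ ν, dB ρ μ ν * u μ * v ν))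
          - ∑ ρ, z ρ * ∑ μ, ∑ ν, u μ * v ν * dB ν μ ρ := by
    intro u v
    have r1 : ∀ (f : Fin D → Fin D → Fin D → ℝ),
        (∑ r, z r * ∑ m, ∑ n, f m n r) = ∑ m, ∑ n, ∑ r, z r * f m n r := by
      intro f
      simp only [Finset.mul_sum]
      exact (sum_rot (fun m n r => z r * f m n r)).symm
    rw [r1 (fun m n r => u m * v n * dG r m n), r1 (fun m n r => u m * v n * dB m n r),
      r1 (fun m n r => dB r m n * u m * v n), r1 (fun m n r => u m * v n * dB n m r)]
    simp only [Finset.mul_sum]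
    rw [← Finset.sum_add_distrib, ← Finset.sum_add_distrib, ← Finset.sum_add_distrib,
      ← Finset.sum_sub_distrib]
    refine Finset.sum_congr rfl fun m _ => ?_
    rw [← Finset.sum_add_distrib, ← Finset.sum_add_distrib, ← Finset.sum_add_distrib,
      ← Finset.sum_sub_distrib]
    refine Finset.sum_congr rfl fun n _ => ?_
    rw [← Finset.sum_add_distrib, ← Finset.sum_add_distrib, ← Finset.sum_add_distrib,
      ← Finset.sum_sub_distrib]
    refine Finset.sum_congr rfl fun r _ => ?_
    linear_combination (u m * v n * z r / 2) * hdG m r n + (u m * v n * z r / 2) * hdG n r m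
      + (u m * v n * z r / 2) * hdG r n m - (u m * v n * z r / 2) * hdB m r n
      - (u m * v n * z r / 2) * hdB r n m + (u m * v n * z r / 2) * hdB n m r
  have HW1x : ∀ (u v : Fin D → ℝ),
      (∑ ρ, z ρ * ∑ μ, ∑ ν, u μ * v ν * dB ν μ ρ)
        = ∑ ρ, z ρ * ∑ μ, ∑ ν, v μ * u ν * dB μ ν ρ := by
    intro u v
    refine Finset.sum_congr rfl fun r _ => ?_
    congr 1
    rw [Finset.sum_comm]
    refine Finset.sum_congr rfl fun a _ => Finset.sum_congr rfl fun b _ => ?_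
    ring
  have HE6 : ∀ (t : ℝ) (u v : Fin D → ℝ),
      (∑ ρ, z ρ * (t * (∑ μ, ∑ ν, u μ * v ν * dG ρ μ ν) / 2))
        = t * (∑ ρ, z ρ * ∑ μ, ∑ ν, u μ * v ν * dG ρ μ ν) / 2 := by
    intro t u v
    rw [Finset.mul_sum, Finset.sum_div]
    exact Finset.sum_congr rfl fun r _ => by ring
  have HE4 : ∀ (u v : Fin D → ℝ),
      (∑ ρ, z ρ * ∑ μ, (∑ σ, dB σ ρ μ * u σ) * v μ)
        = -(∑ ρ, z ρ * ∑ μ, ∑ ν, u μ * v ν * dB μ ν ρ) := by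
    intro u v
    simp only [Finset.mul_sum, Finset.sum_mul, ← Finset.sum_neg_distrib]
    refine Finset.sum_congr rfl fun r _ => ?_
    rw [Finset.sum_comm]
    refine Finset.sum_congr rfl fun a _ => Finset.sum_congr rfl fun b _ => ?_
    linear_combination (z r * u a * v b) * hdB a r b
  have HDB : ∀ (u v : Fin D → ℝ),
      (∑ μ, (∑ σ, db σ μ * u σ) * v μ) = ∑ μ, ∑ ν, u μ * v ν * db μ ν := by
    intro u v
    simp only [Finset.sum_mul]
    rw [Finset.sum_comm]
    refine Finset.sum_congr rfl fun a _ => Finset.sum_congr rfl fun b _ => ?_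
    ring
  have HK56 : ∀ (u v : Fin D → ℝ),
      (∑ μ, ∑ ν, u μ * v ν * db ν μ) = ∑ μ, ∑ ν, v μ * u ν * db μ ν := by
    intro u v
    rw [Finset.sum_comm]
    refine Finset.sum_congr rfl fun a _ => Finset.sum_congr rfl fun b _ => ?_
    ring
  have HBB : (∑ μ, bb μ * C 0 1 μ) = ∑ μ, bb μ * C 1 0 μ :=
    Finset.sum_congr rfl fun μ _ => by rw [hC μ]
  have HBC : (∑ ρ, z ρ * ∑ μ, Bv ρ μ * C 0 1 μ) = ∑ ρ, z ρ * ∑ μ, Bv ρ μ * C 1 0 μ :=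
    Finset.sum_congr rfl fun ρ _ => by
      rw [show (∑ μ, Bv ρ μ * C 0 1 μ) = ∑ μ, Bv ρ μ * C 1 0 μ from
        Finset.sum_congr rfl fun μ _ => by rw [hC μ]]
  have HY1 : (∑ ρ, z ρ * ∑ μ, ∑ ν, A 1 μ * A 0 ν * dG ρ μ ν)
      = ∑ ρ, z ρ * ∑ μ, ∑ ν, A 0 μ * A 1 ν * dG ρ μ ν := by
    refine Finset.sum_congr rfl fun r _ => ?_
    congr 1
    rw [Finset.sum_comm]
    refine Finset.sum_congr rfl fun a _ => Finset.sum_congr rfl fun b _ => ?_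
    rw [hdG r b a]; ring
  have Hanti : ∀ (r : Fin D) (u v : Fin D → ℝ),
      (∑ μ, ∑ ν, dB r μ ν * u μ * v ν) = -(∑ μ, ∑ ν, dB r μ ν * v μ * u ν) := by
    intro r u v
    simp only [← Finset.sum_neg_distrib]
    rw [Finset.sum_comm]
    refine Finset.sum_congr rfl fun a _ => Finset.sum_congr rfl fun b _ => ?_
    linear_combination (u b * v a) * hdB r b a
  have HW2d : ∀ (u : Fin D → ℝ), (∑ ρ, z ρ * ∑ μ, ∑ ν, dB ρ μ ν * u μ * u ν) = 0 := by
    intro u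
    refine Finset.sum_eq_zero fun r _ => ?_
    have h0 := Hanti r u u
    have : (∑ μ, ∑ ν, dB r μ ν * u μ * u ν) = 0 := by linarith
    rw [this, mul_zero]
  have HW2s : (∑ ρ, z ρ * ∑ μ, ∑ ν, dB ρ μ ν * A 1 μ * A 0 ν)
      = -(∑ ρ, z ρ * ∑ μ, ∑ ν, dB ρ μ ν * A 0 μ * A 1 ν) := by
    simp only [← Finset.sum_neg_distrib]
    refine Finset.sum_congr rfl fun r _ => ?_
    rw [Hanti r (A 1) (A 0)]; ring
  have hEz : ∑ ρ : Fin D, z ρ *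
      (ds0 0 * ∑ μ : Fin D, Gv ρ μ * A 0 μ +
            s 0 0 * (∑ μ : Fin D, (∑ σ : Fin D, dG σ ρ μ * A 0 σ) * A 0 μ + ∑ μ : Fin D, Gv ρ μ * C 0 0 μ) +
          (ds0 1 * ∑ μ : Fin D, Gv ρ μ * A 1 μ +
            s 1 0 * (∑ μ : Fin D, (∑ σ : Fin D, dG σ ρ μ * A 0 σ) * A 1 μ + ∑ μ : Fin D, Gv ρ μ * C 0 1 μ)) +
        (∑ μ : Fin D, (∑ σ : Fin D, dB σ ρ μ * A 0 σ) * A 1 μ + ∑ μ : Fin D, Bv ρ μ * C 0 1 μ) +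
      (ds1 0 * ∑ μ : Fin D, Gv ρ μ * A 0 μ +
            s 1 0 * (∑ μ : Fin D, (∑ σ : Fin D, dG σ ρ μ * A 1 σ) * A 0 μ + ∑ μ : Fin D, Gv ρ μ * C 1 0 μ) +
          (ds1 1 * ∑ μ : Fin D, Gv ρ μ * A 1 μ +
            s 1 1 * (∑ μ : Fin D, (∑ σ : Fin D, dG σ ρ μ * A 1 σ) * A 1 μ + ∑ μ : Fin D, Gv ρ μ * C 1 1 μ)) -
        (∑ μ : Fin D, (∑ σ : Fin D, dB σ ρ μ * A 1 σ) * A 0 μ + ∑ μ : Fin D, Bv ρ μ * C 1 0 μ)) -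
      (s 0 0 * ∑ μ : Fin D, ∑ ν : Fin D, A 0 μ * A 0 ν * dG ρ μ ν +
          s 1 0 * ∑ μ : Fin D, ∑ ν : Fin D, A 0 μ * A 1 ν * dG ρ μ ν +
        (s 1 0 * ∑ μ : Fin D, ∑ ν : Fin D, A 1 μ * A 0 ν * dG ρ μ ν +
          s 1 1 * ∑ μ : Fin D, ∑ ν : Fin D, A 1 μ * A 1 ν * dG ρ μ ν)) / 2 -
      ∑ μ : Fin D, ∑ ν : Fin D, dB ρ μ ν * A 0 μ * A 1 ν) = 0 :=
    Finset.sum_eq_zero fun ρ _ => by rw [hEe ρ, mul_zero]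
  have hKc : ∀ u v : Fin D → ℝ, ∑ μ : Fin D, ∑ ν : Fin D, (u μ * v ν) *
      (∑ ρ : Fin D, Gv ν ρ * dz μ ρ +
        ∑ ρ : Fin D, ((dG μ ρ ν + dG ρ μ ν - dG ν μ ρ) / 2 - (dB μ ρ ν + dB ρ ν μ + dB ν μ ρ) / 2) * z ρ +
        (∑ ρ : Fin D, Gv μ ρ * dz ν ρ +
          ∑ ρ : Fin D, ((dG ν ρ μ + dG ρ ν μ - dG μ ν ρ) / 2 + (dB ν ρ μ + dB ρ μ ν + dB μ ν ρ) / 2) * z ρ) +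
        db μ ν - db ν μ) = 0 := fun u v =>
    Finset.sum_eq_zero fun μ _ => Finset.sum_eq_zero fun ν _ => by rw [hKe μ ν, mul_zero]
  have h00 := hKc (A 0) (A 0)
  have h01 := hKc (A 0) (A 1)
  have h10 := hKc (A 1) (A 0)
  have h11 := hKc (A 1) (A 1)
  clear hKc hKe hEe
  simp only [mul_add, mul_sub, add_div, Finset.sum_add_distrib, Finset.sum_sub_distrib]
    at hEz h00 h01 h10 h11
  simp only [Finset.sum_add_distrib, add_mul, mul_add]
  linear_combination hEz
    + (s 0 0/2) * h00 + ((1 + s 1 0)/2) * h01 + ((s 1 0 - 1)/2) * h10 + (s 1 1/2) * h11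
    + H1 (ds0 0) (A 0) + H1 (ds0 1) (A 1) + H1 (ds1 0) (A 0) + H1 (ds1 1) (A 1)
    + H1 (s 0 0) (C 0 0) + H1 (s 1 0) (C 0 1) + H1 (s 1 0) (C 1 0) + H1 (s 1 1) (C 1 1)
    + H2 (s 0 0) (A 0) (A 0) + H2 (s 1 0) (A 0) (A 1) + H2 (s 1 0) (A 1) (A 0)
    + H2 (s 1 1) (A 1) (A 1)
    + (s 0 0) * H3 (A 0) (A 0) + (s 1 0) * H3 (A 0) (A 1) + (s 1 0) * H3 (A 1) (A 0)
    + (s 1 1) * H3 (A 1) (A 1)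
    - (s 0 0/2) * HK13 (A 0) (A 0) - ((1 + s 1 0)/2) * HK13 (A 0) (A 1)
    + ((1 - s 1 0)/2) * HK13 (A 1) (A 0) - (s 1 1/2) * HK13 (A 1) (A 1)
    + (s 0 0/2) * HK56 (A 0) (A 0) + ((1 + s 1 0)/2) * HK56 (A 0) (A 1)
    + ((s 1 0 - 1)/2) * HK56 (A 1) (A 0) + (s 1 1/2) * HK56 (A 1) (A 1)
    - (s 0 0/2) * HM (A 0) (A 0) - ((1 + s 1 0)/2) * HM (A 0) (A 1)
    + ((1 - s 1 0)/2) * HM (A 1) (A 0) - (s 1 1/2) * HM (A 1) (A 1)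
    + (s 0 0/2) * HW1x (A 0) (A 0) + ((1 + s 1 0)/2) * HW1x (A 0) (A 1)
    + ((s 1 0 - 1)/2) * HW1x (A 1) (A 0) + (s 1 1/2) * HW1x (A 1) (A 1)
    + HE6 (s 0 0) (A 0) (A 0) + HE6 (s 1 0) (A 0) (A 1) + HE6 (s 1 0) (A 1) (A 0)
    + HE6 (s 1 1) (A 1) (A 1)
    - HE4 (A 0) (A 1) + HE4 (A 1) (A 0)
    + HDB (A 0) (A 1) - HDB (A 1) (A 0)
    + HBB - HBC
    + (1/2) * HY1
    - (s 0 0/2) * HW2d (A 0) - (s 1 1/2) * HW2d (A 1)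
    + ((1 - s 1 0)/2) * HW2s

/-- On-shell conservation of the Noether current associated with a Killing pair:
if the Euler–Lagrange equations hold identically then `∂₊j⁺ + ∂₋j⁻ = 0`. -/
theorem stmt19 {D : ℕ} (hD : 1 ≤ D)
    (G B : (Fin D → ℝ) → Fin D → Fin D → ℝ)
    (hGs : Smooth2T G) (hGsym : ∀ x μ ν, G x μ ν = G x ν μ)
    (hBs : Smooth2T B) (hBanti : ∀ x μ ν, B x μ ν = -B x ν μ)
    (g : (Fin 2 → ℝ) → Matrix (Fin 2) (Fin 2) ℝ)
    (hgs : ∀ α β, ContDiff ℝ (⊤ : ℕ∞) fun x => g x α β)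
    (hgsym : ∀ x α β, g x α β = g x β α)
    (hgdet : ∀ x, (g x).det < 0)
    (ζ b : (Fin D → ℝ) → Fin D → ℝ) (hζ : SmoothVF ζ) (hb : SmoothVF b)
    (hK : IsKillingPair G B ζ b)
    (X : (Fin 2 → ℝ) → Fin D → ℝ) (hX : ∀ μ, ContDiff ℝ (⊤ : ℕ∞) fun y => X y μ)
    (hEL : ∀ ρ x, ELop G B g X ρ x = 0) :
    ∀ x, pd 0 (fun y => jP G g ζ b X y) x + pd 1 (fun y => jM G g ζ b X y) x = 0 := by
  
  intro x
  have hXp : ∀ μ, Sm (fun y => X y μ) := hX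
  have hLs : ∀ μ, Sm (lowerV G ζ μ) := smLowerV hGs hζ
  have hbs : ∀ μ, Sm (fun p => b p μ) := hb
  have hKe := fun (μ ν : Fin D) => hK μ ν (X x)
  simp only [Dm, Dp, GamM, GamP, Gam, Htor] at hKe
  have hEe := fun (ρ : Fin D) => hEL ρ x
  simp only [ELop] at hEe
  conv at hEe =>
    ext ρ
    rw [pd_pieceAdd X g hXp (fun ν p => G p ρ ν) (fun ν p => B p ρ ν)
          (fun ν => hGs ρ ν) (fun ν => hBs ρ ν) hgs hgdet 0 0 1 x,
        pd_pieceSub X g hXp (fun ν p => G p ρ ν) (fun ν p => B p ρ ν)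
          (fun ν => hGs ρ ν) (fun ν => hBs ρ ν) hgs hgdet 1 1 0 x,
        sqrt_mul_sum g x]
  simp only [jP, jM]
  rw [pd_pieceAdd X g hXp (lowerV G ζ) (fun μ p => b p μ) hLs hbs hgs hgdet 0 0 1 x,
      pd_pieceSub X g hXp (lowerV G ζ) (fun μ p => b p μ) hLs hbs hgs hgdet 1 1 0 x]
  simp only [pd_lowerV hGs hζ, lowerV]
  exact alg (fun α β => Sab g α β x) (fun β => pd 0 (Sab g 0 β) x) (fun β => pd 1 (Sab g 1 β) x)
    (fun α μ => pd α (fun z => X z μ) x)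
    (fun α β μ => pd α (fun y => pd β (fun z => X z μ) y) x)
    (fun μ ν => G (X x) μ ν) (fun μ ν => B (X x) μ ν)
    (fun σ μ ν => pd σ (fun w => G w μ ν) (X x)) (fun σ μ ν => pd σ (fun w => B w μ ν) (X x))
    (fun ν => ζ (X x) ν) (fun μ => b (X x) μ)
    (fun σ ν => pd σ (fun w => ζ w ν) (X x)) (fun σ μ => pd σ (fun w => b w μ) (X x))
    (Sab_symm hgsym x 0 1)
    (fun μ => pd_comm (hXp μ) 0 1 x)
    (fun μ ν => hGsym (X x) μ ν)
    (fun ρ μ ν => by show pd ρ (fun w => G w μ ν) (X x) = pd ρ (fun w => G w ν μ) (X x); rw [show (fun w => G w μ ν) = (fun w => G w ν μ) from funext fun w => hGsym w μ ν])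
    (fun ρ μ ν => by show pd ρ (fun w => B w μ ν) (X x) = -pd ρ (fun w => B w ν μ) (X x); rw [show (fun w => B w μ ν) = (fun w => -B w ν μ) from funext fun w => hBanti w μ ν, pd_neg])
    hKe hEe
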